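/- Let C be a triangulated category endowed with a weight structure w and let i ∈ ℤ. Then C_{w≥i} is closed with respect to all those small products that exist in C: if (X_j)_{j∈J} is a family of objects of C_{w≥i} whose product exists in C, then ∏_{j∈J} X_j ∈ C_{w≥i}. -/

import Mathlib

open CategoryTheory CategoryTheory.Limits CategoryTheory.Pretriangulated CategoryTheory.Category
open scoped ZeroObject

universe w v u

/-- `X` is a retract of `Y`: the identity of `X` factors through `Y`. -/
def IsRetract {D : Type*} [Category D] (X Y : D) : Prop :=
  ∃ (i : X ⟶ Y) (r : Y ⟶ X), i ≫ r = 𝟙 X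

/-- A weight structure on a triangulated category `C`. -/
structure WeightStructure (C : Type u) [Category.{v} C] [Preadditive C] [HasZeroObject C]
    [HasShift C ℤ] [∀ n : ℤ, (shiftFunctor C n).Additive] [Pretriangulated C] where
  /-- the class `C_{w≤0}` -/
  LE : Set C
  /-- the class `C_{w≥0}` -/
  GE : Set C
  le_retract : ∀ ⦃X Y : C⦄, IsRetract X Y → Y ∈ LE → X ∈ LE
  ge_retract : ∀ ⦃X Y : C⦄, IsRetract X Y → Y ∈ GE → X ∈ GE
  le_shift : ∀ X : C, X ∈ LE → X⟦(-1 : ℤ)⟧ ∈ LE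
  ge_shift : ∀ X : C, X ∈ GE → X⟦(1 : ℤ)⟧ ∈ GE
  orthogonal : ∀ ⦃X Y : C⦄, X ∈ LE → Y ∈ GE → ∀ f : X ⟶ Y⟦(1 : ℤ)⟧, f = 0
  exists_decomp : ∀ M : C, ∃ (B A : C) (f : B ⟶ M) (g : M ⟶ A) (h : A ⟶ B⟦(1 : ℤ)⟧),
    B ∈ LE ∧ A⟦(-1 : ℤ)⟧ ∈ GE ∧ Triangle.mk f g h ∈ distTriang C

namespace WeightStructure

variable {C : Type u} [Category.{v} C] [Preadditive C] [HasZeroObject C]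
  [HasShift C ℤ] [∀ n : ℤ, (shiftFunctor C n).Additive] [Pretriangulated C]

/-- the class `C_{w≤i} = C_{w≤0}[i]` -/
def leSet (w : WeightStructure C) (i : ℤ) : Set C := {X : C | X⟦-i⟧ ∈ w.LE}

/-- the class `C_{w≥i} = C_{w≥0}[i]` -/
def geSet (w : WeightStructure C) (i : ℤ) : Set C := {X : C | X⟦-i⟧ ∈ w.GE}

/-- the class `C_{w=i} = C_{w≤i} ∩ C_{w≥i}` -/
def eqSet (w : WeightStructure C) (i : ℤ) : Set C := w.leSet i ∩ w.geSet i

end WeightStructure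

variable {C : Type u} [Category.{v} C] [Preadditive C] [HasZeroObject C]
  [HasShift C ℤ] [∀ n : ℤ, (shiftFunctor C n).Additive] [Pretriangulated C]

/-- Proposition 2.1.3(7): `C_{w≥i}` is closed with respect to all those small products
that exist in `C`. -/
theorem geSet_closed_under_products (w : WeightStructure C) (i : ℤ)
    {J : Type w} (X : J → C) [HasProduct X]
    (hX : ∀ j : J, X j ∈ w.geSet i) :
    (∏ᶜ X) ∈ w.geSet i := by
  -- Let `M := (∏ᶜ X)⟦-i⟧`; we must show `M ∈ w.GE`.
  set M : C := (∏ᶜ X)⟦(-i : ℤ)⟧ with hM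
  -- Weight decomposition of `M⟦1⟧`.
  obtain ⟨B, A, f, g, h, hB, hA, hT⟩ := w.exists_decomp (M⟦(1 : ℤ)⟧)
  -- The shift functor `F := ⟦-i⟧ ⋙ ⟦1⟧` preserves limits.
  let F : C ⥤ C := shiftFunctor C (-i : ℤ) ⋙ shiftFunctor C (1 : ℤ)
  have hLim : IsLimit (F.mapCone (limit.cone (Discrete.functor X))) :=
    isLimitOfPreserves F (limit.isLimit _)
  -- The map `f : B ⟶ M⟦1⟧` is zero because each component lies in
  -- `Hom(B, (X j)⟦-i⟧⟦1⟧) = 0` by orthogonality.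
  have hf : f = 0 := by
    apply hLim.hom_ext
    rintro ⟨j⟩
    have : f ≫ F.map (limit.π (Discrete.functor X) ⟨j⟩) = 0 :=
      w.orthogonal hB (hX j) _
    simpa using this
  -- Hence `M⟦1⟧` is a retract of `A`.
  obtain ⟨r, hr⟩ : ∃ r : A ⟶ M⟦(1 : ℤ)⟧, 𝟙 _ = g ≫ r := Pretriangulated.Triangle.yoneda_exact₂ _ hT (𝟙 (M⟦(1 : ℤ)⟧))
    (by change f ≫ _ = 0; rw [hf, zero_comp])
  -- Shift the retraction by `-1` to see that `M` is a retract of `A⟦-1⟧`.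
  have hretract : IsRetract M (A⟦(-1 : ℤ)⟧) := by
    refine ⟨((shiftEquiv C (1 : ℤ)).unitIso.app M).hom ≫ (shiftFunctor C (-1 : ℤ)).map g,
      (shiftFunctor C (-1 : ℤ)).map r ≫ ((shiftEquiv C (1 : ℤ)).unitIso.app M).inv, ?_⟩
    have e1 : (shiftFunctor C (-1 : ℤ)).map g ≫ (shiftFunctor C (-1 : ℤ)).map r = 𝟙 _ := by rw [← Functor.map_comp, ← hr, CategoryTheory.Functor.map_id]
    erw [assoc, reassoc_of% e1, Iso.hom_inv_id]
  exact w.ge_retract hretract hA
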